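/- Let μ be a finite non-negative Borel measure on the Grassmannian Gr_{n-k} associated to a generalized k-intersection body K. Then μ(Gr_{n-k}) ≤ (n/(n-k)) · c_{n,k} · |K|^{k/n}. -/

import Mathlib

open MeasureTheory Metric

noncomputable section

/-- Volume of the unit Euclidean ball in `ℝ^m`. -/
def unitBallVol (m : ℕ) : ℝ :=
  (volume (ball (0 : EuclideanSpace ℝ (Fin m)) 1)).toReal

/-- The constant `c_{n,k} = |B_2^n|^{(n-k)/n} / |B_2^{n-k}|`. -/
def cnk (n k : ℕ) : ℝ :=
  unitBallVol n ^ (((n : ℝ) - k) / n) / unitBallVol (n - k)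

/-- The Grassmannian of `(n-k)`-dimensional subspaces of `ℝ^n`. -/
def Grass (n k : ℕ) := {H : Submodule ℝ (EuclideanSpace ℝ (Fin n)) // Module.finrank ℝ H = n - k}

/-- Borel measurable structure on the Grassmannian, induced by orthogonal projections. -/
noncomputable instance (n k : ℕ) : MeasurableSpace (Grass n k) :=
  MeasurableSpace.comap
    (fun H => (H.1.subtypeL.comp (H.1.orthogonalProjection) :
      EuclideanSpace ℝ (Fin n) →L[ℝ] EuclideanSpace ℝ (Fin n)))
    (borel _)


open scoped ENNReal in
lemma holder_pow_le {α : Type*} [MeasurableSpace α] [TopologicalSpace α] [CompactSpace α]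
    [OpensMeasurableSpace α] (μ : Measure α) [IsFiniteMeasure μ] {h : α → ℝ}
    (hc : Continuous h) (h0 : ∀ x, 0 ≤ h x) {k n : ℕ} (hk : 0 < k) (hkn : k < n) :
    ∫ x, h x ^ k ∂μ ≤
      (∫ x, h x ^ n ∂μ) ^ ((k : ℝ) / n) * (μ Set.univ).toReal ^ (((n : ℝ) - k) / n) := by
  have hn0 : (0:ℝ) < n := by exact_mod_cast hk.trans hkn
  have hk0 : (0:ℝ) < k := by exact_mod_cast hk
  have hpq : Real.HolderConjugate ((n:ℝ)/k) ((n:ℝ)/((n:ℝ)-k)) := by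
    rw [Real.holderConjugate_iff]
    constructor
    · rw [lt_div_iff₀ hk0]; simpa using (by exact_mod_cast hkn : (k:ℝ) < n)
    · have hnk : (0:ℝ) < (n:ℝ) - k := by linarith [(by exact_mod_cast hkn : (k:ℝ) < n)]
      field_simp; ring
  have hintk : Integrable (fun x => h x ^ k) μ :=
    (hc.pow k).integrable_of_hasCompactSupport (HasCompactSupport.of_compactSpace _)
  have hintn : Integrable (fun x => h x ^ n) μ :=
    (hc.pow n).integrable_of_hasCompactSupport (HasCompactSupport.of_compactSpace _)
  have hBnn : 0 ≤ ∫ x, h x ^ n ∂μ := integral_nonneg fun x => pow_nonneg (h0 x) n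
  have hAnn : 0 ≤ ∫ x, h x ^ k ∂μ := integral_nonneg fun x => pow_nonneg (h0 x) k
  set f : α → ℝ≥0∞ := fun x => ENNReal.ofReal (h x ^ k) with hf
  have hfm : AEMeasurable f μ :=
    (ENNReal.continuous_ofReal.comp (hc.pow k)).measurable.aemeasurable
  have key := ENNReal.lintegral_mul_le_Lp_mul_Lq μ hpq hfm
    (aemeasurable_const : AEMeasurable (fun _ : α => (1:ℝ≥0∞)) μ)
  have hfp : ∀ x, f x ^ ((n:ℝ)/k) = ENNReal.ofReal (h x ^ n) := by
    intro x
    rw [hf, ENNReal.ofReal_rpow_of_nonneg (pow_nonneg (h0 x) k) (le_of_lt hpq.pos)]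
    congr 1
    rw [← Real.rpow_natCast (h x) k, ← Real.rpow_natCast (h x) n,
      ← Real.rpow_mul (h0 x)]
    congr 1
    field_simp
  simp only [Pi.mul_apply, mul_one] at key
  have hL1 : ∫⁻ x, f x ∂μ = ENNReal.ofReal (∫ x, h x ^ k ∂μ) := by
    rw [ofReal_integral_eq_lintegral_ofReal hintk
      (Filter.Eventually.of_forall fun x => pow_nonneg (h0 x) k)]
  have hL2 : ∫⁻ x, f x ^ ((n:ℝ)/k) ∂μ = ENNReal.ofReal (∫ x, h x ^ n ∂μ) := by
    rw [ofReal_integral_eq_lintegral_ofReal hintn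
      (Filter.Eventually.of_forall fun x => pow_nonneg (h0 x) n)]
    exact lintegral_congr fun x => hfp x
  have hL3 : ∫⁻ x, (fun _ : α => (1:ℝ≥0∞)) x ^ ((n:ℝ)/((n:ℝ)-k)) ∂μ = μ Set.univ := by
    simp
  rw [hL1, hL2, hL3] at key
  have hq' : (1:ℝ) / ((n:ℝ)/((n:ℝ)-k)) = ((n:ℝ)-k)/n := by
    rw [one_div, inv_div]
  have hp' : (1:ℝ) / ((n:ℝ)/k) = (k:ℝ)/n := by rw [one_div, inv_div]
  rw [hp', hq'] at key
  have hne : ENNReal.ofReal (∫ x, h x ^ n ∂μ) ^ ((k:ℝ)/n) * (μ Set.univ) ^ (((n:ℝ)-k)/n) ≠ ⊤ := by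
    apply ENNReal.mul_ne_top
    · exact ENNReal.rpow_ne_top_of_nonneg (by positivity) ENNReal.ofReal_ne_top
    · exact ENNReal.rpow_ne_top_of_nonneg
        (div_nonneg (by linarith [(by exact_mod_cast hkn.le : (k:ℝ) ≤ n)]) hn0.le)
        (measure_ne_top μ _)
  have := ENNReal.toReal_mono hne key
  rw [ENNReal.toReal_ofReal hAnn, ENNReal.toReal_mul, ← ENNReal.toReal_rpow,
    ← ENNReal.toReal_rpow, ENNReal.toReal_ofReal hBnn] at this
  exact this

open scoped ENNReal in
lemma sphere_univ_toReal {F : Type*} [NormedAddCommGroup F] [InnerProductSpace ℝ F]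
    [FiniteDimensional ℝ F] [MeasurableSpace F] [BorelSpace F] {m : ℕ} (hm : 1 ≤ m)
    (hfr : Module.finrank ℝ F = m) :
    ((volume : Measure F).toSphere Set.univ).toReal = m * unitBallVol m := by
  haveI : Nontrivial F := Module.nontrivial_of_finrank_pos (R := ℝ) (M := F) (by omega)
  haveI : Nonempty (Fin m) := Fin.pos_iff_nonempty.mp (by omega)
  rw [MeasureTheory.Measure.toSphere_apply_univ, hfr, InnerProductSpace.volume_ball, hfr,
    unitBallVol, EuclideanSpace.volume_ball, Fintype.card_fin]
  simp [ENNReal.toReal_mul]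

lemma unitBallVol_pos (m : ℕ) : 0 < unitBallVol m :=
  ENNReal.toReal_pos (measure_ball_pos _ _ one_pos).ne' measure_ball_lt_top.ne

/-- If `ν` is the measure on the Grassmannian associated to a generalized `k`-intersection
body `K` (with gauge `N`), then `ν(Gr_{n-k}) ≤ (n/(n-k)) c_{n,k} |K|^{k/n}`, where `|K|` is
given by the polar volume formula. -/
theorem grassmannian_measure_bound (n k : ℕ) (hn : 1 ≤ n) (hk : 1 ≤ k) (hkn : k ≤ n - 1)
    (N : EuclideanSpace ℝ (Fin n) → ℝ) (hNcont : Continuous N)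
    (hNpos : ∀ x : EuclideanSpace ℝ (Fin n), x ≠ 0 → 0 < N x)
    (hNhom : ∀ (c : ℝ) (x : EuclideanSpace ℝ (Fin n)), N (c • x) = |c| * N x)
    (ν : Measure (Grass n k)) [IsFiniteMeasure ν]
    (hGIB : ∀ g : EuclideanSpace ℝ (Fin n) → ℝ, Continuous g →
      (∫ θ : sphere (0 : EuclideanSpace ℝ (Fin n)) 1, ((N θ)⁻¹) ^ k * g θ
          ∂((volume : Measure (EuclideanSpace ℝ (Fin n))).toSphere))
        = ∫ H : Grass n k,
            (∫ y : sphere (0 : H.1) 1, g ((y : H.1) : EuclideanSpace ℝ (Fin n))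
              ∂((volume : Measure H.1).toSphere)) ∂ν)
    (volK : ℝ)
    (hvolK : volK = (1 / (n : ℝ)) *
      ∫ θ : sphere (0 : EuclideanSpace ℝ (Fin n)) 1, ((N θ)⁻¹) ^ n
        ∂((volume : Measure (EuclideanSpace ℝ (Fin n))).toSphere)) :
    (ν Set.univ).toReal ≤ ((n : ℝ) / ((n : ℝ) - k)) * cnk n k * volK ^ ((k : ℝ) / n) := by
  have hkn' : k < n := by omega
  have hknR : (k : ℝ) < n := by exact_mod_cast hkn'
  have hnR : (0:ℝ) < n := by exact_mod_cast hn
  set σ := (volume : Measure (EuclideanSpace ℝ (Fin n))).toSphere with hσ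
  set h : sphere (0 : EuclideanSpace ℝ (Fin n)) 1 → ℝ := fun θ => (N θ)⁻¹ with hh
  have hc : Continuous h := by
    apply Continuous.inv₀ (hNcont.comp continuous_subtype_val)
    exact fun θ => (hNpos _ (ne_zero_of_mem_unit_sphere θ)).ne'
  have h0 : ∀ θ, 0 ≤ h θ := fun θ =>
    inv_nonneg.mpr (hNpos _ (ne_zero_of_mem_unit_sphere θ)).le
  -- Step 1: take g ≡ 1
  have h1 := hGIB (fun _ => (1:ℝ)) continuous_const
  simp only [mul_one] at h1
  set c0 : ℝ := ((n - k : ℕ) : ℝ) * unitBallVol (n - k) with hc0def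
  have hSH : ∀ H : Grass n k,
      (∫ _y : sphere (0 : H.1) 1, (1:ℝ) ∂((volume : Measure H.1).toSphere)) = c0 := by
    intro H
    rw [integral_const, smul_eq_mul, mul_one, measureReal_def, sphere_univ_toReal (by omega) H.2]
  have h1' : (∫ θ, h θ ^ k ∂σ) = c0 * (ν Set.univ).toReal := by
    rw [hh, hσ, h1, integral_congr_ae (Filter.Eventually.of_forall hSH), integral_const,
      smul_eq_mul, mul_comm, measureReal_def]
  -- Step 2: Hölder
  have holder := holder_pow_le σ hc h0 (by omega : 0 < k) hkn'
  have hσuniv : (σ Set.univ).toReal = n * unitBallVol n := by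
    rw [hσ]
    exact sphere_univ_toReal hn (by simp [finrank_euclideanSpace])
  have hBnn : 0 ≤ ∫ θ, h θ ^ n ∂σ := integral_nonneg fun θ => pow_nonneg (h0 θ) n
  have hvolKnn : 0 ≤ volK := by
    rw [hvolK]
    exact mul_nonneg (by positivity) hBnn
  have hBeq : (∫ θ, h θ ^ n ∂σ) = n * volK := by
    rw [hvolK, ← mul_assoc, mul_one_div_cancel hnR.ne', one_mul]
  rw [h1', hBeq, hσuniv] at holder
  -- Step 3: combine
  have hc0pos : 0 < c0 := by
    have hcast : ((n - k : ℕ) : ℝ) = (n : ℝ) - k := by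
      rw [Nat.cast_sub hkn'.le]
    rw [hc0def, hcast]
    exact mul_pos (by linarith) (unitBallVol_pos _)
  have hM : 0 ≤ (ν Set.univ).toReal := ENNReal.toReal_nonneg
  have hexp : (k:ℝ)/n + ((n:ℝ)-k)/n = 1 := by field_simp; ring
  have hrhs : ((n:ℝ) * volK) ^ ((k:ℝ)/n) * ((n:ℝ) * unitBallVol n) ^ (((n:ℝ)-k)/n)
      = (n:ℝ) * (volK ^ ((k:ℝ)/n) * unitBallVol n ^ (((n:ℝ)-k)/n)) := by
    rw [Real.mul_rpow hnR.le hvolKnn, Real.mul_rpow hnR.le (unitBallVol_pos n).le]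
    have hnn : (n:ℝ) ^ ((k:ℝ)/n) * (n:ℝ) ^ (((n:ℝ)-k)/n) = (n:ℝ) := by
      rw [← Real.rpow_add hnR, hexp, Real.rpow_one]
    calc (n:ℝ) ^ ((k:ℝ)/n) * volK ^ ((k:ℝ)/n) * ((n:ℝ) ^ (((n:ℝ)-k)/n)
          * unitBallVol n ^ (((n:ℝ)-k)/n))
        = ((n:ℝ) ^ ((k:ℝ)/n) * (n:ℝ) ^ (((n:ℝ)-k)/n))
          * (volK ^ ((k:ℝ)/n) * unitBallVol n ^ (((n:ℝ)-k)/n)) := by ring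
      _ = (n:ℝ) * (volK ^ ((k:ℝ)/n) * unitBallVol n ^ (((n:ℝ)-k)/n)) := by rw [hnn]
  rw [hrhs] at holder
  have hfinal : (ν Set.univ).toReal ≤
      (n:ℝ) * (volK ^ ((k:ℝ)/n) * unitBallVol n ^ (((n:ℝ)-k)/n)) / c0 := by
    rw [le_div_iff₀ hc0pos]
    linarith [holder]
  refine hfinal.trans (le_of_eq ?_)
  rw [cnk, hc0def, Nat.cast_sub hkn'.le]
  have hu := (unitBallVol_pos (n - k)).ne'
  field_simp
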